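/- Lemma (real index, odd-dimensional Lorentzian case): let m ≥ 1 and n = 2m+1. Every m-dimensional totally null complex subspace N of ℂ^{2m+1} (with respect to the complexified Lorentzian form B_ℂ) has real index 0 or 1, i.e. dim_ℂ (N ⊓ c(N)) ≤ 1. -/

import Mathlib

/-- The complexified Minkowski bilinear form on `ℂⁿ`:
`B(x,y) = -x₀·y₀ + ∑_{i=1}^{n-1} x_i·y_i`. -/
noncomputable def minkB (n : ℕ) (x y : Fin n → ℂ) : ℂ :=
  ∑ i : Fin n, if (i : ℕ) = 0 then -(x i * y i) else x i * y i

/-- The image of a complex subspace of `ℂⁿ` under componentwise complex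
conjugation (again a complex subspace, since conjugation is an antilinear
involution): `c(N) = {x | c(x) ∈ N}`. -/
noncomputable def conjSubmodule (n : ℕ) (N : Submodule ℂ (Fin n → ℂ)) : Submodule ℂ (Fin n → ℂ) where
  carrier := {x | (fun i => (starRingEnd ℂ) (x i)) ∈ N}
  add_mem' := by
    intro a b ha hb
    have h : (fun i => (starRingEnd ℂ) ((a + b) i))
        = (fun i => (starRingEnd ℂ) (a i)) + (fun i => (starRingEnd ℂ) (b i)) := by
      funext i; simp
    show (fun i => (starRingEnd ℂ) ((a + b) i)) ∈ N
    rw [h]; exact N.add_mem ha hb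
  zero_mem' := by
    show (fun i => (starRingEnd ℂ) ((0 : Fin n → ℂ) i)) ∈ N
    have h : (fun i : Fin n => (starRingEnd ℂ) ((0 : Fin n → ℂ) i)) = (0 : Fin n → ℂ) := by
      funext i; simp
    rw [h]; exact N.zero_mem
  smul_mem' := by
    intro c a ha
    have h : (fun i => (starRingEnd ℂ) ((c • a) i))
        = (starRingEnd ℂ) c • (fun i => (starRingEnd ℂ) (a i)) := by
      funext i; simp [mul_comm]
    show (fun i => (starRingEnd ℂ) ((c • a) i)) ∈ N
    rw [h]; exact N.smul_mem ((starRingEnd ℂ) c) ha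

open scoped ComplexInnerProductSpace in
lemma dep_of_isotropic {k : ℕ} (x y : Fin (k+1) → ℂ)
    (hxx : minkB (k+1) x (fun i => (starRingEnd ℂ) (x i)) = 0)
    (hyy : minkB (k+1) y (fun i => (starRingEnd ℂ) (y i)) = 0)
    (hxy : minkB (k+1) x (fun i => (starRingEnd ℂ) (y i)) = 0)
    (hx : x ≠ 0) : ∃ r : ℂ, y = r • x := by
  classical
  set α := x 0 with hα
  set β := y 0 with hβ
  set x' : EuclideanSpace ℂ (Fin k) := WithLp.toLp 2 (fun j : Fin k => x j.succ) with hx'def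
  set y' : EuclideanSpace ℂ (Fin k) := WithLp.toLp 2 (fun j : Fin k => y j.succ) with hy'def
  have ex : ∑ j : Fin k, x j.succ * (starRingEnd ℂ) (x j.succ) = α * (starRingEnd ℂ) α := by
    have := hxx
    simp only [minkB, Fin.sum_univ_succ, Fin.val_zero, if_true, Fin.val_succ,
      Nat.succ_ne_zero, if_false] at this
    linear_combination this
  have ey : ∑ j : Fin k, y j.succ * (starRingEnd ℂ) (y j.succ) = β * (starRingEnd ℂ) β := by
    have := hyy
    simp only [minkB, Fin.sum_univ_succ, Fin.val_zero, if_true, Fin.val_succ,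
      Nat.succ_ne_zero, if_false] at this
    linear_combination this
  have exy : ∑ j : Fin k, x j.succ * (starRingEnd ℂ) (y j.succ) = α * (starRingEnd ℂ) β := by
    have := hxy
    simp only [minkB, Fin.sum_univ_succ, Fin.val_zero, if_true, Fin.val_succ,
      Nat.succ_ne_zero, if_false] at this
    linear_combination this
  -- inner products
  have ixx : ⟪x', x'⟫ = (starRingEnd ℂ) α * α := by
    simp only [PiLp.inner_apply, RCLike.inner_apply', hx'def]
    calc ∑ j : Fin k, (starRingEnd ℂ) (x j.succ) * x j.succ
        = (starRingEnd ℂ) (∑ j : Fin k, x j.succ * (starRingEnd ℂ) (x j.succ)) := by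
          rw [map_sum]; congr 1; funext j; simp [mul_comm]
      _ = (starRingEnd ℂ) α * α := by rw [ex]; simp [mul_comm]
  have iyy : ⟪y', y'⟫ = (starRingEnd ℂ) β * β := by
    simp only [PiLp.inner_apply, RCLike.inner_apply', hy'def]
    calc ∑ j : Fin k, (starRingEnd ℂ) (y j.succ) * y j.succ
        = (starRingEnd ℂ) (∑ j : Fin k, y j.succ * (starRingEnd ℂ) (y j.succ)) := by
          rw [map_sum]; congr 1; funext j; simp [mul_comm]
      _ = (starRingEnd ℂ) β * β := by rw [ey]; simp [mul_comm]
  have ixy : ⟪x', y'⟫ = (starRingEnd ℂ) α * β := by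
    simp only [PiLp.inner_apply, RCLike.inner_apply', hx'def, hy'def]
    calc ∑ j : Fin k, (starRingEnd ℂ) (x j.succ) * y j.succ
        = (starRingEnd ℂ) (∑ j : Fin k, x j.succ * (starRingEnd ℂ) (y j.succ)) := by
          rw [map_sum]; congr 1; funext j; simp [mul_comm]
      _ = (starRingEnd ℂ) α * β := by rw [exy]; simp [mul_comm]
  -- norm relations
  have nx : ‖x'‖ = ‖α‖ := by
    have h : ‖x'‖ ^ 2 = RCLike.re ((starRingEnd ℂ) α * α) := by
      rw [← ixx]; exact norm_sq_eq_re_inner (𝕜 := ℂ) x'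
    have h2 : ‖α‖ ^ 2 = ‖x'‖ ^ 2 := by
      rw [h]
      simp [RCLike.re_to_complex, Complex.mul_re, Complex.conj_re, Complex.conj_im,
        Complex.sq_norm, Complex.normSq_apply]
    nlinarith [norm_nonneg x', norm_nonneg α]
  have ny : ‖y'‖ = ‖β‖ := by
    have h : ‖y'‖ ^ 2 = RCLike.re ((starRingEnd ℂ) β * β) := by
      rw [← iyy]; exact norm_sq_eq_re_inner (𝕜 := ℂ) y'
    have h2 : ‖β‖ ^ 2 = ‖y'‖ ^ 2 := by
      rw [h]
      simp [RCLike.re_to_complex, Complex.mul_re, Complex.conj_re, Complex.conj_im,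
        Complex.sq_norm, Complex.normSq_apply]
    nlinarith [norm_nonneg y', norm_nonneg β]
  have hx'0 : x' ≠ 0 := by
    intro h0
    apply hx
    have hα0 : α = 0 := by
      have : ‖α‖ = 0 := by rw [← nx, h0, norm_zero]
      simpa using this
    funext i
    refine Fin.cases ?_ ?_ i
    · exact hα0
    · intro j
      have := congrArg (fun v => v j) h0
      simpa [hx'def] using this
  by_cases hy'0 : y' = 0
  · refine ⟨0, ?_⟩
    have hβ0 : β = 0 := by
      have : ‖β‖ = 0 := by rw [← ny, hy'0, norm_zero]
      simpa using this
    funext i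
    refine Fin.cases ?_ ?_ i
    · simpa using hβ0
    · intro j
      have := congrArg (fun v => v j) hy'0
      simpa [hy'def] using this
  · have hnorm : ‖⟪x', y'⟫‖ = ‖x'‖ * ‖y'‖ := by
      rw [ixy, nx, ny, norm_mul, RCLike.norm_conj]
    obtain ⟨r, hr0, hr⟩ := (norm_inner_eq_norm_iff hx'0 hy'0).mp hnorm
    have hα0 : α ≠ 0 := by
      intro h0
      apply hx'0
      have : ‖x'‖ = 0 := by rw [nx, h0, norm_zero]
      exact norm_eq_zero.mp this
    have hβr : β = r * α := by
      have h1 : ⟪x', y'⟫ = r * ⟪x', x'⟫ := by rw [hr, inner_smul_right]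
      rw [ixy, ixx] at h1
      have hcα : (starRingEnd ℂ) α ≠ 0 := by simpa using hα0
      exact mul_left_cancel₀ hcα (by linear_combination h1)
    refine ⟨r, ?_⟩
    funext i
    refine Fin.cases ?_ ?_ i
    · simp only [Pi.smul_apply, smul_eq_mul]; exact hβr
    · intro j
      have := congrArg (fun v => v j) hr
      simpa [hx'def, hy'def, mul_comm] using this

/-- Real index in the odd-dimensional Lorentzian case: every `m`-dimensional
totally null complex subspace `N` of `ℂ^{2m+1}` has real index `0` or `1`,
i.e. `dim_ℂ (N ⊓ c(N)) ≤ 1`. -/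
theorem real_index_odd (m : ℕ) (hm : 1 ≤ m)
    (N : Submodule ℂ (Fin (2 * m + 1) → ℂ))
    (hdim : Module.finrank ℂ N = m)
    (hnull : ∀ x ∈ N, ∀ y ∈ N, minkB (2 * m + 1) x y = 0) :
    Module.finrank ℂ ↥(N ⊓ conjSubmodule (2 * m + 1) N) ≤ 1 := by
  by_cases hbot : N ⊓ conjSubmodule (2 * m + 1) N = ⊥
  · rw [hbot]; simp
  · obtain ⟨v, hv, hv0⟩ := Submodule.exists_mem_ne_zero_of_ne_bot hbot
    have hle : N ⊓ conjSubmodule (2 * m + 1) N ≤ Submodule.span ℂ {v} := by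
      intro w hw
      have hvN : v ∈ N := hv.1
      have hvc : (fun i => (starRingEnd ℂ) (v i)) ∈ N := hv.2
      have hwN : w ∈ N := hw.1
      have hwc : (fun i => (starRingEnd ℂ) (w i)) ∈ N := hw.2
      obtain ⟨r, hr⟩ := dep_of_isotropic (k := 2 * m) v w
        (hnull v hvN _ hvc) (hnull w hwN _ hwc) (hnull v hvN _ hwc) hv0
      exact Submodule.mem_span_singleton.mpr ⟨r, hr.symm⟩
    calc Module.finrank ℂ ↥(N ⊓ conjSubmodule (2 * m + 1) N)
        ≤ Module.finrank ℂ ↥(Submodule.span ℂ {v}) := Submodule.finrank_mono hle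
      _ = 1 := finrank_span_singleton hv0
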